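/- For every integer N_r ≥ 2, the ORS event probabilities sum to one: (N_r − 1)/(2N_r − 1) + (N_r + 2)/(2(2N_r − 1)) + ∑_{k=4}^{N_r+1} [2·N_r·C(N_r, k−1) / ((2N_r − (k−1))·C(2N_r, k−1))] = 1 (the sum over k being empty when N_r = 2). -/

import Mathlib

lemma choose_ratio (m j : ℕ) (hj : j < m) :
    ((m.choose (j + 1) : ℚ)) * (j + 1) = (m.choose j : ℚ) * ((m : ℚ) - j) := by
  have h := Nat.choose_succ_right_eq m j
  have hcast : ((m.choose (j + 1) * (j + 1) : ℕ) : ℚ) = ((m.choose j * (m - j) : ℕ) : ℚ) := by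
    exact_mod_cast congrArg (Nat.cast : ℕ → ℚ) h
  push_cast [Nat.cast_sub hj.le] at hcast
  linarith [hcast]

/-- Key telescoping identity: for `3 ≤ j ≤ n`,
`2n·C(n,j)/((2n−j)·C(2n,j)) = 2·C(n,j)/C(2n,j) − 2·C(n,j+1)/C(2n,j+1)`. -/
lemma key_telescope (n j : ℕ) (hjn : j ≤ n) (hn : 1 ≤ n) :
    (2 * (n : ℚ) * (n.choose j : ℚ)) / ((2 * (n : ℚ) - j) * (((2 * n).choose j : ℚ)))
      = 2 * (n.choose j : ℚ) / ((2 * n).choose j : ℚ)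
        - 2 * (n.choose (j + 1) : ℚ) / ((2 * n).choose (j + 1) : ℚ) := by
  have hj2n : j < 2 * n := lt_of_le_of_lt hjn (by omega)
  have hc : ((2 * n).choose j : ℚ) ≠ 0 := by
    exact_mod_cast (Nat.choose_pos hj2n.le).ne'
  have hc' : ((2 * n).choose (j + 1) : ℚ) ≠ 0 := by
    exact_mod_cast (Nat.choose_pos hj2n).ne'
  have hd : (2 * (n : ℚ) - j) ≠ 0 := by
    have : (j : ℚ) < 2 * n := by exact_mod_cast hj2n
    linarith
  have h1 : ((2 * n).choose (j + 1) : ℚ) * (j + 1)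
      = ((2 * n).choose j : ℚ) * (2 * (n : ℚ) - j) := by
    have := choose_ratio (2 * n) j hj2n
    push_cast at this ⊢
    linarith
  rcases eq_or_lt_of_le hjn with heq | hlt
  · -- j = n : numerator of the second fraction vanishes
    subst heq
    have hz : (j.choose (j + 1) : ℚ) = 0 := by
      rw [Nat.choose_eq_zero_of_lt (Nat.lt_succ_self j)]; norm_num
    rw [hz]
    field_simp
    ring
  · have h2 : (n.choose (j + 1) : ℚ) * (j + 1) = (n.choose j : ℚ) * ((n : ℚ) - j) := by
      have := choose_ratio n j hlt
      push_cast at this ⊢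
      linarith
    have hj1 : ((j : ℚ) + 1) ≠ 0 := by positivity
    -- express choose (j+1) in terms of choose j
    have e1 : ((2 * n).choose (j + 1) : ℚ)
        = ((2 * n).choose j : ℚ) * (2 * (n : ℚ) - j) / (j + 1) := by
      field_simp; linarith [h1]
    have e2 : (n.choose (j + 1) : ℚ) = (n.choose j : ℚ) * ((n : ℚ) - j) / (j + 1) := by
      field_simp; linarith [h2]
    rw [e1, e2]
    have hnum : ((2 * n).choose j : ℚ) * (2 * (n : ℚ) - j) / (j + 1) ≠ 0 := by
      apply div_ne_zero (mul_ne_zero hc hd) hj1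
    field_simp
    ring

/-- For every integer `Nr ≥ 2`, the ORS event probabilities sum to one:
`(Nr − 1)/(2Nr − 1) + (Nr + 2)/(2(2Nr − 1))
  + ∑_{k=4}^{Nr+1} 2·Nr·C(Nr, k−1)/((2Nr − (k−1))·C(2Nr, k−1)) = 1`. -/
theorem ORS_probabilities_sum_to_one (Nr : ℕ) (hNr : 2 ≤ Nr) :
    ((Nr : ℚ) - 1) / (2 * (Nr : ℚ) - 1)
      + ((Nr : ℚ) + 2) / (2 * (2 * (Nr : ℚ) - 1))
      + ∑ k ∈ Finset.Icc 4 (Nr + 1),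
          (2 * (Nr : ℚ) * (Nr.choose (k - 1) : ℚ))
            / ((2 * (Nr : ℚ) - ((k : ℚ) - 1)) * (((2 * Nr).choose (k - 1) : ℚ)))
      = 1 := by
  set g : ℕ → ℚ := fun i => 2 * (Nr.choose (i + 3) : ℚ) / ((2 * Nr).choose (i + 3) : ℚ)
    with hg
  have hsum : ∑ k ∈ Finset.Icc 4 (Nr + 1),
      (2 * (Nr : ℚ) * (Nr.choose (k - 1) : ℚ))
        / ((2 * (Nr : ℚ) - ((k : ℚ) - 1)) * (((2 * Nr).choose (k - 1) : ℚ)))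
      = g 0 - g (Nr - 2) := by
    rw [show Finset.Icc 4 (Nr + 1) = Finset.Ico 4 (Nr + 2) by
      rw [← Finset.Ico_add_one_right_eq_Icc]; rfl,
      Finset.sum_Ico_eq_sum_range]
    have hlen : Nr + 2 - 4 = Nr - 2 := by omega
    rw [hlen, ← Finset.sum_range_sub' g (Nr - 2)]
    apply Finset.sum_congr rfl
    intro i hi
    simp only [Finset.mem_range] at hi
    have h1 : 4 + i - 1 = i + 3 := by omega
    have h2 : ((4 + i : ℕ) : ℚ) - 1 = ((i + 3 : ℕ) : ℚ) := by push_cast; ring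
    rw [h1, h2, hg]
    have := key_telescope Nr (i + 3) (by omega) (by omega)
    simpa using this
  rw [hsum]
  have hgend : g (Nr - 2) = 0 := by
    have : Nr - 2 + 3 = Nr + 1 := by omega
    simp only [hg, this, Nat.choose_eq_zero_of_lt (Nat.lt_succ_self Nr)]
    norm_num
  have hg0 : g 0 = ((Nr : ℚ) - 2) / (2 * (2 * (Nr : ℚ) - 1)) := by
    have hch : ∀ m : ℕ, 6 * (m.choose 3 : ℚ) = (m : ℚ) * ((m : ℚ) - 1) * ((m : ℚ) - 2) ∨
        m < 3 := by
      intro m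
      by_cases hm : 3 ≤ m
      · left
        have := Nat.descFactorial_eq_factorial_mul_choose m 3
        have hd : m.descFactorial 3 = m * (m - 1) * (m - 2) := by
          simp [Nat.descFactorial_succ, Nat.descFactorial_zero]
          ring
        have h6 : (6 : ℕ) * m.choose 3 = m * (m - 1) * (m - 2) := by
          rw [← hd, this]; norm_num [Nat.factorial]
        have := congrArg (Nat.cast : ℕ → ℚ) h6
        push_cast [Nat.cast_sub (by omega : 1 ≤ m), Nat.cast_sub (by omega : 2 ≤ m)] at this
        linarith
      · right; omega
    have hA : 6 * ((Nr.choose 3 : ℕ) : ℚ) = (Nr : ℚ) * ((Nr : ℚ) - 1) * ((Nr : ℚ) - 2) ∨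
        Nr < 3 := hch Nr
    have hB : 6 * (((2 * Nr).choose 3 : ℕ) : ℚ)
        = (2 * (Nr : ℚ)) * (2 * (Nr : ℚ) - 1) * (2 * (Nr : ℚ) - 2) := by
      rcases hch (2 * Nr) with h | h
      · push_cast at h ⊢; linarith
      · omega
    have hcne : (((2 * Nr).choose 3 : ℕ) : ℚ) ≠ 0 := by
      exact_mod_cast (Nat.choose_pos (by omega : 3 ≤ 2 * Nr)).ne'
    have hNrQ : (2 : ℚ) ≤ (Nr : ℚ) := by exact_mod_cast hNr
    simp only [hg, Nat.zero_add]
    rcases hA with hA | hA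
    · rw [div_eq_div_iff hcne (by nlinarith : (2 * (2 * (Nr : ℚ) - 1)) ≠ 0)]
      nlinarith [hA, hB]
    · -- Nr = 2 : both sides are 0
      interval_cases Nr
      · norm_num [Nat.choose]
  rw [hgend, hg0]
  have hNrQ : (2 : ℚ) ≤ (Nr : ℚ) := by exact_mod_cast hNr
  have hne : 2 * (Nr : ℚ) - 1 ≠ 0 := by linarith
  field_simp
  have hne' : -1 + (Nr : ℚ) * 2 ≠ 0 := by linarith
  have hinv : (-1 + (Nr : ℚ) * 2)⁻¹ * (-1 + (Nr : ℚ) * 2) = 1 := inv_mul_cancel₀ hne'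
  linear_combination 2 * hinv
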